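/- Let μ be a probability measure on ℝ^{dN} × M₁ with ∫ |y| dμ(y,w) < ∞, set W̄ := ∫ (w ⊗ I_d) dμ(y,w) and z := ∫ (w ⊗ I_d) y dμ(y,w), and let α > 0 satisfy α‖𝒥⊥W̄‖ < 1. Define m := (α^{−1} I_{dN} − 𝒥⊥ W̄)^{−1} 𝒥⊥ z and f(x) := (I_{dN} − α 𝒥⊥ W̄)^{−1}(x − m). Then for every x ∈ ℝ^{dN}: f(x) − P_α f(x) = x − m, where P_α f(x) := ∫ f(α 𝒥⊥ (w ⊗ I_d)(x + y)) dμ(y,w). In particular, f solves the Poisson equation id − π(id) = f − P_α f for any invariant probability measure π of P_α with mean m. -/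

import Mathlib

open MeasureTheory ProbabilityTheory Filter Matrix Set
open scoped Kronecker Topology ENNReal NNReal

noncomputable section

namespace DistSA

instance matMS {m n : Type*} : MeasurableSpace (Matrix m n ℝ) := by
  unfold Matrix; infer_instance

/-- The vector space `ℝ^{dN}`, coordinates indexed by pairs `(i, j)` where `i` is the agent. -/
abbrev EVec (N d : ℕ) := Fin N × Fin d → ℝ

/-- Euclidean norm on a finite product of copies of `ℝ`. -/
def enorm {ι : Type*} [Fintype ι] (x : ι → ℝ) : ℝ := Real.sqrt (∑ i, (x i) ^ 2)

/-- Spectral (operator) norm with respect to the Euclidean norm. -/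
def specNorm {ι : Type*} [Fintype ι] (A : Matrix ι ι ℝ) : ℝ :=
  sInf {c | 0 ≤ c ∧ ∀ x : ι → ℝ, enorm (A.mulVec x) ≤ c * enorm x}

/-- Spectral radius of a real matrix: largest modulus of a complex eigenvalue. -/
def specRad {ι : Type*} [Fintype ι] [DecidableEq ι] (A : Matrix ι ι ℝ) : ℝ :=
  sSup ((fun z : ℂ => ‖z‖) '' spectrum ℂ (A.map (algebraMap ℝ ℂ)))

variable (N d : ℕ)

/-- `J = (1/N) 𝟏𝟏ᵀ`, the orthogonal projector onto the span of the all-one vector. -/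
def Jmat : Matrix (Fin N) (Fin N) ℝ := Matrix.of fun _ _ => (N : ℝ)⁻¹

/-- `J⊥ = I_N - J`. -/
def Jperp : Matrix (Fin N) (Fin N) ℝ := 1 - Jmat N

/-- `w ⊗ I_d`, acting on `ℝ^{dN}`. -/
def Kro (w : Matrix (Fin N) (Fin N) ℝ) : Matrix (Fin N × Fin d) (Fin N × Fin d) ℝ :=
  w ⊗ₖ (1 : Matrix (Fin d) (Fin d) ℝ)

/-- `𝒥⊥ = J⊥ ⊗ I_d`. -/
def Jperpb : Matrix (Fin N × Fin d) (Fin N × Fin d) ℝ := Kro N d (Jperp N)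

/-- `𝒥 = J ⊗ I_d`. -/
def Jb : Matrix (Fin N × Fin d) (Fin N × Fin d) ℝ := Kro N d (Jmat N)

/-- `⟨x⟩ = (1/N)(𝟏ᵀ ⊗ I_d) x = (x₁ + ⋯ + x_N)/N`. -/
def avg (x : EVec N d) : Fin d → ℝ := fun j => (N : ℝ)⁻¹ * ∑ i, x (i, j)

/-- `𝟏 ⊗ ϑ`, the consensus vector with common value `ϑ`. -/
def emb (ϑ : Fin d → ℝ) : EVec N d := fun p => ϑ p.2

/-- Row-stochastic matrices: nonnegative entries, rows summing to 1. -/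
def RowStochastic (w : Matrix (Fin N) (Fin N) ℝ) : Prop :=
  (∀ i j, 0 ≤ w i j) ∧ ∀ i, ∑ j, w i j = 1

/-- One step of the normalized-disagreement Markov chain:
`x ↦ α 𝒥⊥ (w ⊗ I_d)(x + y)` for an observation `(y, w)`. -/
def stepFun (α : ℝ) (x : EVec N d) (p : EVec N d × Matrix (Fin N) (Fin N) ℝ) : EVec N d :=
  α • (Jperpb N d).mulVec ((Kro N d p.2).mulVec (x + p.1))

/-- `π` is an invariant probability measure for the kernel `P_α` driven by `μ`:
`π P_α = π`. -/
def IsInvariant (μ : Measure (EVec N d × Matrix (Fin N) (Fin N) ℝ)) (α : ℝ)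
    (π : Measure (EVec N d)) : Prop :=
  ∀ A : Set (EVec N d), MeasurableSet A →
    ∫⁻ x, (Measure.map (stepFun N d α x) μ) A ∂π = π A

/-- The kernel `P_α` acting on vector-valued functions. -/
def kerPV (μ : Measure (EVec N d × Matrix (Fin N) (Fin N) ℝ)) (α : ℝ)
    (f : EVec N d → EVec N d) : EVec N d → EVec N d :=
  fun x => ∫ p, f (stepFun N d α x p) ∂μ

/-- The kernel `P_α` acting on scalar functions. -/
def kerPS (μ : Measure (EVec N d × Matrix (Fin N) (Fin N) ℝ)) (α : ℝ)
    (g : EVec N d → ℝ) : EVec N d → ℝ :=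
  fun x => ∫ p, g (stepFun N d α x p) ∂μ


section Aux

lemma enorm_eq_norm {ι : Type*} [Fintype ι] (x : ι → ℝ) :
    enorm x = ‖(WithLp.equiv 2 (ι → ℝ)).symm x‖ := by
  rw [EuclideanSpace.norm_eq]
  simp [enorm, Real.norm_eq_abs, sq_abs]

lemma enorm_nonneg' {ι : Type*} [Fintype ι] (x : ι → ℝ) : 0 ≤ enorm x := Real.sqrt_nonneg _

lemma enorm_eq_zero' {ι : Type*} [Fintype ι] {x : ι → ℝ} (h : enorm x = 0) : x = 0 := by
  rw [enorm_eq_norm] at h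
  exact congrArg (WithLp.equiv 2 (ι → ℝ)) (norm_eq_zero.mp h)

lemma enorm_smul' {ι : Type*} [Fintype ι] (c : ℝ) (x : ι → ℝ) :
    enorm (c • x) = |c| * enorm x := by
  rw [enorm_eq_norm, enorm_eq_norm, show (WithLp.equiv 2 (ι → ℝ)).symm (c • x)
    = c • (WithLp.equiv 2 (ι → ℝ)).symm x from rfl, norm_smul, Real.norm_eq_abs]

lemma abs_le_enorm {ι : Type*} [Fintype ι] (x : ι → ℝ) (i : ι) : |x i| ≤ enorm x := by
  rw [← Real.sqrt_sq_eq_abs]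
  exact Real.sqrt_le_sqrt (Finset.single_le_sum (fun j _ => sq_nonneg (x j)) (Finset.mem_univ i))

lemma specNorm_spec {ι : Type*} [Fintype ι] [DecidableEq ι] (A : Matrix ι ι ℝ) :
    0 ≤ specNorm A ∧ ∀ x : ι → ℝ, enorm (A.mulVec x) ≤ specNorm A * enorm x := by
  have hcl : IsClosed {c : ℝ | 0 ≤ c ∧ ∀ x : ι → ℝ, enorm (A.mulVec x) ≤ c * enorm x} := by
    have : {c : ℝ | 0 ≤ c ∧ ∀ x : ι → ℝ, enorm (A.mulVec x) ≤ c * enorm x}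
        = {c | 0 ≤ c} ∩ ⋂ x : ι → ℝ, {c | enorm (A.mulVec x) ≤ c * enorm x} := by
      ext c; simp [Set.mem_iInter]
    rw [this]
    exact isClosed_Ici.inter (isClosed_iInter fun x =>
      isClosed_le continuous_const (continuous_id.mul continuous_const))
  have hne : {c : ℝ | 0 ≤ c ∧ ∀ x : ι → ℝ, enorm (A.mulVec x) ≤ c * enorm x}.Nonempty := by
    set L := LinearMap.toContinuousLinearMap (Matrix.toEuclideanLin A)
    refine ⟨‖L‖, norm_nonneg _, fun x => ?_⟩
    have h := L.le_opNorm ((WithLp.equiv 2 (ι → ℝ)).symm x)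
    rw [enorm_eq_norm, enorm_eq_norm]
    exact h
  have hbdd : BddBelow {c : ℝ | 0 ≤ c ∧ ∀ x : ι → ℝ, enorm (A.mulVec x) ≤ c * enorm x} :=
    ⟨0, fun c hc => hc.1⟩
  exact hcl.csInf_mem hne hbdd

lemma det_ne_zero_one_sub {ι : Type*} [Fintype ι] [DecidableEq ι]
    (α : ℝ) (hα : 0 < α) (A : Matrix ι ι ℝ) (h : α * specNorm A < 1) :
    ((1 : Matrix ι ι ℝ) - α • A).det ≠ 0 := by
  intro hdet
  obtain ⟨v, hv, hmul⟩ := (Matrix.exists_mulVec_eq_zero_iff).mpr hdet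
  have hexp : ((1 : Matrix ι ι ℝ) - α • A).mulVec v = v - α • A.mulVec v := by
    rw [Matrix.sub_mulVec, Matrix.one_mulVec, Matrix.smul_mulVec]
  rw [hexp, sub_eq_zero] at hmul
  have hpos : 0 < enorm v := by
    rcases lt_or_eq_of_le (enorm_nonneg' v) with h' | h'
    · exact h'
    · exact absurd (enorm_eq_zero' h'.symm) hv
  have : enorm v ≤ α * specNorm A * enorm v := by
    have h1 := enorm_smul' α (A.mulVec v)
    rw [← hmul] at h1
    calc enorm v = |α| * enorm (A.mulVec v) := h1
    _ = α * enorm (A.mulVec v) := by rw [abs_of_pos hα]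
    _ ≤ α * (specNorm A * enorm v) :=
        mul_le_mul_of_nonneg_left ((specNorm_spec A).2 v) hα.le
    _ = α * specNorm A * enorm v := by ring
  nlinarith

lemma integrable_pi' {α : Type*} [MeasurableSpace α] {μ : Measure α} {ι : Type*} [Fintype ι]
    [DecidableEq ι] {F : α → ι → ℝ} (h : ∀ i, Integrable (fun p => F p i) μ) :
    Integrable F μ := by
  have hF : F = fun p => ∑ i, F p i • (Pi.single i 1 : ι → ℝ) := by
    funext p; ext j
    simp [Finset.sum_apply, Pi.single_apply]
  rw [hF]
  exact integrable_finset_sum _ fun i _ => (h i).smul_const _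

lemma integral_pi_apply {α : Type*} [MeasurableSpace α] {μ : Measure α} {ι : Type*} [Fintype ι]
    {F : α → ι → ℝ} (h : Integrable F μ) (i : ι) :
    (∫ p, F p ∂μ) i = ∫ p, F p i ∂μ :=
  ((ContinuousLinearMap.proj i : (ι → ℝ) →L[ℝ] ℝ).integral_comp_comm h).symm

end Aux

/-- The explicit solution of the Poisson equation for the identity function:
with `m = (α⁻¹I − 𝒥⊥W̄)⁻¹ 𝒥⊥ z` and `f(x) = (I − α𝒥⊥W̄)⁻¹(x − m)`, one has
`f − P_α f = id − m`; in particular `f` solves the Poisson equation `id − π(id) = f − P_α f`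
for any invariant probability measure `π` of `P_α` with mean `m`. -/
theorem poisson_equation_solution
    (hN : 0 < N) (hd : 0 < d)
    (μ : Measure (EVec N d × Matrix (Fin N) (Fin N) ℝ)) [IsProbabilityMeasure μ]
    (hM1 : ∀ᵐ p ∂μ, RowStochastic N p.2)
    (hmom1 : ∫⁻ p, ENNReal.ofReal (enorm p.1) ∂μ < ⊤)
    (Wbar : Matrix (Fin N × Fin d) (Fin N × Fin d) ℝ)
    (hWbar : Wbar = Matrix.of fun a b => ∫ p, Kro N d p.2 a b ∂μ)
    (z : EVec N d) (hz : z = fun a => ∫ p, (Kro N d p.2).mulVec p.1 a ∂μ)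
    (α : ℝ) (hα : 0 < α) (hαW : α * specNorm (Jperpb N d * Wbar) < 1)
    (m : EVec N d)
    (hm : m = (α⁻¹ • (1 : Matrix (Fin N × Fin d) (Fin N × Fin d) ℝ)
        - Jperpb N d * Wbar)⁻¹.mulVec ((Jperpb N d).mulVec z))
    (f : EVec N d → EVec N d)
    (hf : f = fun x =>
      ((1 : Matrix (Fin N × Fin d) (Fin N × Fin d) ℝ)
          - α • (Jperpb N d * Wbar))⁻¹.mulVec (x - m)) :
    (∀ x : EVec N d, f x - kerPV N d μ α f x = x - m) ∧
      ∀ π : Measure (EVec N d), IsProbabilityMeasure π → IsInvariant N d μ α π →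
        (fun a => ∫ x, x a ∂π) = m →
        ∀ x : EVec N d, x - (fun a => ∫ y, y a ∂π) = f x - kerPV N d μ α f x := by
  classical
  set A := Jperpb N d * Wbar with hAdef
  set B := (1 : Matrix (Fin N × Fin d) (Fin N × Fin d) ℝ) - α • A with hBdef
  have hdet : B.det ≠ 0 := det_ne_zero_one_sub α hα A hαW
  have hBinv : B⁻¹ * B = 1 := Matrix.nonsing_inv_mul B (isUnit_iff_ne_zero.mpr hdet)
  have hBinv' : B * B⁻¹ = 1 := Matrix.mul_nonsing_inv B (isUnit_iff_ne_zero.mpr hdet)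
  -- m = α • B⁻¹ (J⊥ z)
  have hC : (α⁻¹ • (1 : Matrix (Fin N × Fin d) (Fin N × Fin d) ℝ) - A) = α⁻¹ • B := by
    rw [hBdef, smul_sub, smul_smul, inv_mul_cancel₀ hα.ne', one_smul]
  have hCinv : (α⁻¹ • (1 : Matrix (Fin N × Fin d) (Fin N × Fin d) ℝ) - A)⁻¹ = α • B⁻¹ := by
    apply Matrix.inv_eq_right_inv
    rw [hC, Matrix.smul_mul, Matrix.mul_smul, hBinv', smul_smul, inv_mul_cancel₀ hα.ne', one_smul]
  have hm' : m = α • B⁻¹.mulVec ((Jperpb N d).mulVec z) := by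
    rw [hm, hCinv, Matrix.smul_mulVec]
  -- measurability and integrability of the Kronecker entries
  have hKroMeas : ∀ c e : Fin N × Fin d,
      Measurable (fun p : EVec N d × Matrix (Fin N) (Fin N) ℝ => Kro N d p.2 c e) := by
    intro c e
    have hA1 : Measurable (fun w : Matrix (Fin N) (Fin N) ℝ => w c.1) := measurable_pi_apply c.1
    have hB1 : Measurable (fun v : Fin N → ℝ => v e.1) := measurable_pi_apply e.1
    have h2 : Measurable (fun p : EVec N d × Matrix (Fin N) (Fin N) ℝ => p.2 c.1 e.1) :=
      (hB1.comp hA1).comp measurable_snd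
    have : (fun p : EVec N d × Matrix (Fin N) (Fin N) ℝ => Kro N d p.2 c e)
        = fun p => p.2 c.1 e.1 * (1 : Matrix (Fin d) (Fin d) ℝ) c.2 e.2 := rfl
    rw [this]
    exact h2.mul_const _
  have hw01 : ∀ᵐ p ∂μ, ∀ i j : Fin N, |p.2 i j| ≤ 1 := by
    filter_upwards [hM1] with p hp i j
    rcases hp with ⟨hnn, hsum⟩
    rw [abs_of_nonneg (hnn i j)]
    calc p.2 i j ≤ ∑ k, p.2 i k :=
          Finset.single_le_sum (fun k _ => hnn i k) (Finset.mem_univ j)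
    _ = 1 := hsum i
  have hbKro : ∀ᵐ p ∂μ, ∀ c e : Fin N × Fin d, |Kro N d p.2 c e| ≤ 1 := by
    filter_upwards [hw01] with p hp c e
    have heq : Kro N d p.2 c e = p.2 c.1 e.1 * (1 : Matrix (Fin d) (Fin d) ℝ) c.2 e.2 := rfl
    have h1 : |(1 : Matrix (Fin d) (Fin d) ℝ) c.2 e.2| ≤ 1 := by
      rw [Matrix.one_apply]; split <;> simp
    rw [heq, abs_mul]
    calc |p.2 c.1 e.1| * |(1 : Matrix (Fin d) (Fin d) ℝ) c.2 e.2|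
        ≤ 1 * 1 := mul_le_mul (hp _ _) h1 (abs_nonneg _) zero_le_one
    _ = 1 := mul_one 1
  have hInt1 : ∀ c e : Fin N × Fin d,
      Integrable (fun p : EVec N d × Matrix (Fin N) (Fin N) ℝ => Kro N d p.2 c e) μ := by
    intro c e
    refine (integrable_const (1 : ℝ)).mono' ((hKroMeas c e).aestronglyMeasurable) ?_
    filter_upwards [hbKro] with p hp
    simpa [Real.norm_eq_abs] using hp c e
  have henorm_cont : Continuous (enorm : EVec N d → ℝ) := by
    unfold enorm
    exact Real.continuous_sqrt.comp (continuous_finset_sum _ fun i _ => (continuous_apply i).pow 2)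
  have hIntEnorm : Integrable (fun p : EVec N d × Matrix (Fin N) (Fin N) ℝ => enorm p.1) μ := by
    refine ⟨(henorm_cont.measurable.comp measurable_fst).aestronglyMeasurable, ?_⟩
    rw [HasFiniteIntegral]
    have heq : ∀ p : EVec N d × Matrix (Fin N) (Fin N) ℝ,
        ‖enorm p.1‖ₑ = ENNReal.ofReal (enorm p.1) := fun p => by
      rw [← ofReal_norm, Real.norm_of_nonneg (enorm_nonneg' _)]
    simpa only [heq] using hmom1
  have hInt2 : ∀ c e : Fin N × Fin d,
      Integrable (fun p : EVec N d × Matrix (Fin N) (Fin N) ℝ => Kro N d p.2 c e * p.1 e) μ := by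
    intro c e
    have hmeas : Measurable (fun p : EVec N d × Matrix (Fin N) (Fin N) ℝ => Kro N d p.2 c e * p.1 e) :=
      (hKroMeas c e).mul ((measurable_pi_apply e).comp measurable_fst)
    refine hIntEnorm.mono' hmeas.aestronglyMeasurable ?_
    filter_upwards [hbKro] with p hp
    rw [Real.norm_eq_abs, abs_mul]
    calc |Kro N d p.2 c e| * |p.1 e| ≤ 1 * |p.1 e| :=
          mul_le_mul_of_nonneg_right (hp c e) (abs_nonneg _)
    _ = |p.1 e| := one_mul _
    _ ≤ enorm p.1 := abs_le_enorm p.1 e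
  have hInty : ∀ c : Fin N × Fin d,
      Integrable (fun p : EVec N d × Matrix (Fin N) (Fin N) ℝ => ((Kro N d p.2).mulVec p.1) c) μ :=
    fun c => integrable_finset_sum _ fun e _ => hInt2 c e
  -- the key identity
  have key : ∀ x : EVec N d, f x - kerPV N d μ α f x = x - m := by
    intro x
    have hIntx : ∀ c : Fin N × Fin d,
        Integrable (fun p : EVec N d × Matrix (Fin N) (Fin N) ℝ => ((Kro N d p.2).mulVec x) c) μ :=
      fun c => integrable_finset_sum _ fun e _ => (hInt1 c e).mul_const (x e)
    have hint_c : ∀ c : Fin N × Fin d,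
        Integrable (fun p : EVec N d × Matrix (Fin N) (Fin N) ℝ =>
          ((Kro N d p.2).mulVec (x + p.1)) c) μ := by
      intro c
      have h1 : (fun p : EVec N d × Matrix (Fin N) (Fin N) ℝ => ((Kro N d p.2).mulVec (x + p.1)) c)
          = fun p => ((Kro N d p.2).mulVec x) c + ((Kro N d p.2).mulVec p.1) c := by
        funext p; rw [Matrix.mulVec_add]; rfl
      rw [h1]
      exact (hIntx c).add (hInty c)
    have hval_c : ∀ c : Fin N × Fin d,
        ∫ p, ((Kro N d p.2).mulVec (x + p.1)) c ∂μ = Wbar.mulVec x c + z c := by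
      intro c
      have h1 : (fun p : EVec N d × Matrix (Fin N) (Fin N) ℝ => ((Kro N d p.2).mulVec (x + p.1)) c)
          = fun p => ((Kro N d p.2).mulVec x) c + ((Kro N d p.2).mulVec p.1) c := by
        funext p; rw [Matrix.mulVec_add]; rfl
      rw [h1, integral_add (hIntx c) (hInty c)]
      congr 1
      · have h2 : (fun p : EVec N d × Matrix (Fin N) (Fin N) ℝ => ((Kro N d p.2).mulVec x) c)
            = fun p => ∑ e, Kro N d p.2 c e * x e := rfl
        rw [h2, integral_finset_sum _ (fun e _ => (hInt1 c e).mul_const (x e))]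
        simp only [integral_mul_const]
        rw [hWbar]
        rfl
      · rw [hz]
    have hIntStep : ∀ b : Fin N × Fin d,
        Integrable (fun p => stepFun N d α x p b) μ := by
      intro b
      have h1 : (fun p : EVec N d × Matrix (Fin N) (Fin N) ℝ => stepFun N d α x p b)
          = fun p => α * ∑ c, Jperpb N d b c * ((Kro N d p.2).mulVec (x + p.1)) c := rfl
      rw [h1]
      exact (integrable_finset_sum _ fun c _ => (hint_c c).const_mul _).const_mul α
    have hValStep : ∀ b : Fin N × Fin d,
        ∫ p, stepFun N d α x p b ∂μ
          = (α • (Jperpb N d).mulVec (Wbar.mulVec x + z)) b := by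
      intro b
      have h1 : (fun p : EVec N d × Matrix (Fin N) (Fin N) ℝ => stepFun N d α x p b)
          = fun p => α * ∑ c, Jperpb N d b c * ((Kro N d p.2).mulVec (x + p.1)) c := rfl
      rw [h1, integral_const_mul, integral_finset_sum _ (fun c _ => (hint_c c).const_mul _)]
      have h2 : ∀ c : Fin N × Fin d,
          ∫ p, Jperpb N d b c * ((Kro N d p.2).mulVec (x + p.1)) c ∂μ
            = Jperpb N d b c * (Wbar.mulVec x c + z c) := fun c => by
        rw [integral_const_mul, hval_c c]
      rw [Finset.sum_congr rfl fun c _ => h2 c]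
      rfl
    have hcoordF : ∀ a : Fin N × Fin d,
        (fun p : EVec N d × Matrix (Fin N) (Fin N) ℝ => f (stepFun N d α x p) a)
          = fun p => ∑ b, B⁻¹ a b * (stepFun N d α x p b - m b) := by
      intro a; funext p; rw [hf]; rfl
    have hIntF : Integrable (fun p => f (stepFun N d α x p)) μ := by
      apply integrable_pi'
      intro a
      rw [hcoordF a]
      exact integrable_finset_sum _ fun b _ =>
        ((hIntStep b).sub (integrable_const (m b))).const_mul _
    have hker : kerPV N d μ α f x
        = B⁻¹.mulVec ((α • (Jperpb N d).mulVec (Wbar.mulVec x + z)) - m) := by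
      funext a
      have h0 : kerPV N d μ α f x a = ∫ p, f (stepFun N d α x p) a ∂μ :=
        integral_pi_apply hIntF a
      have h4 := integral_finset_sum (μ := μ) Finset.univ
        (f := fun (b : Fin N × Fin d) (p : EVec N d × Matrix (Fin N) (Fin N) ℝ) =>
          B⁻¹ a b * (stepFun N d α x p b - m b))
        (fun b _ => ((hIntStep b).sub (integrable_const (m b))).const_mul _)
      rw [h0, hcoordF a, h4]
      have h3 : ∀ b : Fin N × Fin d,
          ∫ p, B⁻¹ a b * (stepFun N d α x p b - m b) ∂μ
            = B⁻¹ a b * ((α • (Jperpb N d).mulVec (Wbar.mulVec x + z)) b - m b) := fun b => by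
        rw [integral_const_mul, integral_sub (hIntStep b) (integrable_const (m b)),
          integral_const, hValStep b]
        simp
      rw [Finset.sum_congr rfl fun b _ => h3 b]
      rfl
    -- final algebra
    have hv : (α • (Jperpb N d).mulVec (Wbar.mulVec x + z))
        = α • A.mulVec x + α • ((Jperpb N d).mulVec z) := by
      rw [Matrix.mulVec_add, smul_add, hAdef, ← Matrix.mulVec_mulVec]
    have hBx : B.mulVec x = x - α • A.mulVec x := by
      rw [hBdef, Matrix.sub_mulVec, Matrix.one_mulVec, Matrix.smul_mulVec]
    calc f x - kerPV N d μ α f x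
        = B⁻¹.mulVec (x - m) - B⁻¹.mulVec ((α • (Jperpb N d).mulVec (Wbar.mulVec x + z)) - m) := by
          rw [hker, hf]
    _ = B⁻¹.mulVec ((x - m) - ((α • (Jperpb N d).mulVec (Wbar.mulVec x + z)) - m)) :=
          (Matrix.mulVec_sub _ _ _).symm
    _ = B⁻¹.mulVec (B.mulVec x - α • ((Jperpb N d).mulVec z)) := by
          rw [hv, hBx]; congr 1; abel
    _ = x - m := by
          rw [Matrix.mulVec_sub, Matrix.mulVec_mulVec, hBinv, Matrix.one_mulVec,
            Matrix.mulVec_smul, ← hm']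
  refine ⟨key, ?_⟩
  intro π _ _ hmean x
  rw [hmean, key x]


end DistSA
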